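/- Let H be a separable real Hilbert space with an orthonormal (Hilbert) basis (ψ_{k,m}) indexed by pairs (k,m) ∈ ℕ × ℕ, and let (μ_m)_{m ∈ ℕ} be a non-increasing sequence of strictly positive real numbers converging to 0. Then for every f ∈ H and every ε > 0 there exist an index function φ : [0, μ_0] → ℝ (continuous, non-decreasing, with φ(0) = 0) and an element v ∈ H with ‖v‖ ≤ (1+ε)‖f‖ such that ⟨f, ψ_{k,m}⟩ = φ(μ_m) · ⟨v, ψ_{k,m}⟩ for all k, m ∈ ℕ. -/

import Mathlib

open scoped ENNReal NNReal

lemma aux_div_sqrt {a b t : ℝ} (hb : 0 ≤ b) (ht : 0 ≤ t) (hab : t + b = a) :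
    t / Real.sqrt a ≤ 2 * (Real.sqrt a - Real.sqrt b) := by
  have ha : 0 ≤ a := by linarith
  rcases eq_or_lt_of_le ha with h0 | h0
  · have hb0 : b = 0 := by linarith
    have ht0 : t = 0 := by linarith
    simp [← h0, hb0, ht0]
  · have hs : 0 < Real.sqrt a := Real.sqrt_pos.mpr h0
    rw [div_le_iff₀ hs]
    have h1 : Real.sqrt a ^ 2 = a := Real.sq_sqrt ha
    have h2 : Real.sqrt b ^ 2 = b := Real.sq_sqrt hb
    have h3 : Real.sqrt b ≤ Real.sqrt a := Real.sqrt_le_sqrt (by linarith)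
    have h4 : 0 ≤ Real.sqrt b := Real.sqrt_nonneg b
    nlinarith [sq_nonneg (Real.sqrt a - Real.sqrt b)]

theorem stmt_1 {H : Type*} [NormedAddCommGroup H] [InnerProductSpace ℝ H]
    [CompleteSpace H]
    (ψ : HilbertBasis (ℕ × ℕ) ℝ H) (μ : ℕ → ℝ)
    (hanti : Antitone μ) (hpos : ∀ m, 0 < μ m)
    (hlim : Filter.Tendsto μ Filter.atTop (nhds 0)) :
    ∀ (f : H) (ε : ℝ), 0 < ε →
      ∃ (φ : ℝ → ℝ) (v : H),
        ContinuousOn φ (Set.Icc 0 (μ 0)) ∧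
        MonotoneOn φ (Set.Icc 0 (μ 0)) ∧
        φ 0 = 0 ∧
        ‖v‖ ≤ (1 + ε) * ‖f‖ ∧
        ∀ k m : ℕ, (inner ℝ f (ψ (k, m)) : ℝ) = φ (μ m) * (inner ℝ v (ψ (k, m)) : ℝ) := by
  intro f ε hε
  by_cases hf0 : f = 0
  · refine ⟨fun _ => 0, 0, continuousOn_const, monotoneOn_const, rfl, by simp [hf0], ?_⟩
    intro k m; simp [hf0]
  -- main case
  have hfpos : (0:ℝ) < ‖f‖ := norm_pos_iff.mpr hf0
  set δ : ℝ := (ε * ‖f‖) ^ 2 with hδdef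
  have hδpos : 0 < δ := by positivity
  have hsqrtδ : Real.sqrt δ = ε * ‖f‖ := Real.sqrt_sq (by positivity)
  -- coefficients
  set c : ℕ × ℕ → ℝ := fun p => (inner ℝ f (ψ p) : ℝ) with hcdef
  have hcsq : ∀ p : ℕ × ℕ, (inner ℝ f (ψ p) : ℝ) * (inner ℝ (ψ p) f : ℝ) = c p ^ 2 := by
    intro p; rw [sq]; rw [hcdef]; simp [real_inner_comm]
  have hc_hasSum : HasSum (fun p => c p ^ 2) (‖f‖ ^ 2) := by
    have := ψ.hasSum_inner_mul_inner f f
    rw [real_inner_self_eq_norm_sq] at this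
    simpa only [hcsq] using this
  have hc_sum : Summable fun p => c p ^ 2 := hc_hasSum.summable
  have hc_tsum : ∑' p, c p ^ 2 = ‖f‖ ^ 2 := hc_hasSum.tsum_eq
  -- swapped version
  set F : ℕ × ℕ → ℝ := fun q => c (q.2, q.1) ^ 2 with hFdef
  have hF_sum : Summable F := by
    rw [← (Equiv.prodComm ℕ ℕ).summable_iff]
    exact hc_sum
  -- level weights
  set t : ℕ → ℝ := fun m => ∑' k, c (k, m) ^ 2 with htdef
  have ht_sum_k : ∀ m, Summable fun k => c (k, m) ^ 2 := fun m => hF_sum.prod_factor m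
  have ht0 : ∀ m, 0 ≤ t m := fun m => tsum_nonneg fun k => sq_nonneg _
  have hT : Summable t := by
    have := (summable_prod_of_nonneg (f := F) (fun q => sq_nonneg _)).mp hF_sum
    exact this.2
  have hT_tsum : ∑' m, t m = ‖f‖ ^ 2 := by
    calc ∑' m, t m = ∑' (q : ℕ × ℕ), F q := (Summable.tsum_prod' hF_sum (fun m => hF_sum.prod_factor m)).symm
      _ = ∑' (p : ℕ × ℕ), F ((Equiv.prodComm ℕ ℕ) p) := ((Equiv.prodComm ℕ ℕ).tsum_eq F).symm
      _ = ∑' p, c p ^ 2 := by apply tsum_congr; rintro ⟨k, m⟩; rfl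
      _ = ‖f‖ ^ 2 := hc_tsum
  -- tails
  set R : ℕ → ℝ := fun m => ∑' j, t (j + m) with hRdef
  have hRsum : ∀ m, Summable fun j => t (j + m) := fun m => (summable_nat_add_iff m).mpr hT
  have hR0 : ∀ m, 0 ≤ R m := fun m => tsum_nonneg fun j => ht0 _
  have hR_zero : R 0 = ‖f‖ ^ 2 := by simp only [hRdef]; simpa using hT_tsum
  have hR_rec : ∀ m, R m = t m + R (m + 1) := by
    intro m
    calc R m = ∑' j, t (j + m) := rfl
      _ = t (0 + m) + ∑' j, t (j + 1 + m) := Summable.tsum_eq_zero_add (hRsum m)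
      _ = t m + R (m + 1) := by
          rw [Nat.zero_add]
          congr 1
          apply tsum_congr
          intro j
          congr 1
          omega
  have ht_le_R : ∀ m, t m ≤ R m := by
    intro m; rw [hR_rec m]; linarith [hR0 (m + 1)]
  have hR_anti : ∀ m, R (m + 1) ≤ R m := by
    intro m; rw [hR_rec m]; linarith [ht0 m]
  have hcsq_le_t : ∀ k m, c (k, m) ^ 2 ≤ t m :=
    fun k m => Summable.le_tsum (ht_sum_k m) k fun j _ => sq_nonneg _
  -- the W function
  set W : ℝ → ℝ := fun x => ∑' m, t m * min 1 (x / μ m) with hWdef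
  have hterm_nonneg : ∀ m (x : ℝ), 0 ≤ x → 0 ≤ t m * min 1 (x / μ m) := by
    intro m x hx
    exact mul_nonneg (ht0 m) (le_min zero_le_one (div_nonneg hx (hpos m).le))
  have hterm_le : ∀ m (x : ℝ), 0 ≤ x → t m * min 1 (x / μ m) ≤ t m := by
    intro m x hx
    exact mul_le_of_le_one_right (ht0 m) (min_le_left _ _)
  have hWsum : ∀ x : ℝ, 0 ≤ x → Summable fun m => t m * min 1 (x / μ m) := by
    intro x hx
    exact Summable.of_nonneg_of_le (fun m => hterm_nonneg m x hx) (fun m => hterm_le m x hx) hT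
  have hW_nonneg : ∀ x : ℝ, 0 ≤ x → 0 ≤ W x := fun x hx =>
    tsum_nonneg fun m => hterm_nonneg m x hx
  have hW0 : W 0 = 0 := by
    rw [hWdef]; simp
  have hWmono : ∀ x y : ℝ, 0 ≤ x → x ≤ y → W x ≤ W y := by
    intro x y hx hxy
    apply Summable.tsum_le_tsum _ (hWsum x hx) (hWsum y (hx.trans hxy))
    intro m
    have h1 : x / μ m ≤ y / μ m := by
      have := hpos m
      gcongr
    exact mul_le_mul_of_nonneg_left (min_le_min le_rfl h1) (ht0 m)
  have hWcont : ContinuousOn W (Set.Icc 0 (μ 0)) := by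
    apply continuousOn_tsum (u := t) ?_ hT
    · intro m x hx
      rw [Real.norm_eq_abs, abs_of_nonneg (hterm_nonneg m x hx.1)]
      exact hterm_le m x hx.1
    · intro m
      exact (continuous_const.mul (continuous_const.min ((continuous_id.div_const (μ m))))).continuousOn
  have hWR : ∀ m, R m ≤ W (μ m) := by
    intro m
    apply Summable.tsum_le_tsum_of_inj (fun j => j + m) (add_left_injective m)
    · intro n _
      exact hterm_nonneg n (μ m) (hpos m).le
    · intro j
      have h1 : (1:ℝ) ≤ μ m / μ (j + m) := (one_le_div (hpos _)).mpr (hanti (by omega))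
      rw [min_eq_left h1, mul_one]
    · exact hRsum m
    · exact hWsum (μ m) (hpos m).le
  -- the index function
  set φ : ℝ → ℝ := fun x => min 1 (Real.sqrt (Real.sqrt (W x / δ))) with hφdef
  have hφcont : ContinuousOn φ (Set.Icc 0 (μ 0)) := by
    have houter : Continuous fun y : ℝ => min 1 (Real.sqrt (Real.sqrt (y / δ))) :=
      continuous_const.min
        (Real.continuous_sqrt.comp (Real.continuous_sqrt.comp (continuous_id.div_const δ)))
    exact houter.comp_continuousOn hWcont
  have hφmono : MonotoneOn φ (Set.Icc 0 (μ 0)) := by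
    intro x hx y hy hxy
    apply min_le_min le_rfl
    apply Real.sqrt_le_sqrt
    apply Real.sqrt_le_sqrt
    exact (div_le_div_iff_of_pos_right hδpos).mpr (hWmono x y hx.1 hxy)
  have hφ0 : φ 0 = 0 := by
    rw [hφdef]; simp [hW0]
  have hφnonneg : ∀ x : ℝ, 0 ≤ φ x := fun x => le_min zero_le_one (Real.sqrt_nonneg _)
  -- key lower bound for φ(μ m)^2
  have hφsq : ∀ m, min 1 (Real.sqrt (R m / δ)) ≤ φ (μ m) ^ 2 := by
    intro m
    have hWm : 0 ≤ W (μ m) / δ := div_nonneg (hW_nonneg _ (hpos m).le) hδpos.le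
    have hs2 : Real.sqrt (Real.sqrt (W (μ m) / δ)) ^ 2 = Real.sqrt (W (μ m) / δ) :=
      Real.sq_sqrt (Real.sqrt_nonneg _)
    have hRW : Real.sqrt (R m / δ) ≤ Real.sqrt (W (μ m) / δ) := by
      apply Real.sqrt_le_sqrt
      exact (div_le_div_iff_of_pos_right hδpos).mpr (hWR m)
    rcases le_total (Real.sqrt (Real.sqrt (W (μ m) / δ))) 1 with h | h
    · rw [hφdef]
      simp only [min_eq_right h]
      rw [hs2]
      refine le_trans (min_le_right _ _) hRW
    · rw [hφdef]
      simp only [min_eq_left h]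
      rw [one_pow]
      exact min_le_left _ _
  -- the coefficients of v
  set w : ℕ → ℝ := fun m => Real.sqrt δ / Real.sqrt (R m) with hwdef
  have hw0 : ∀ m, 0 ≤ w m := fun m => div_nonneg (Real.sqrt_nonneg _) (Real.sqrt_nonneg _)
  set g : ℕ × ℕ → ℝ := fun p => c p / φ (μ p.2) with hgdef
  have hczero : ∀ k m, R m = 0 → c (k, m) = 0 := by
    intro k m h0
    have h1 : t m ≤ 0 := h0 ▸ ht_le_R m
    have h2 : c (k, m) ^ 2 ≤ 0 := le_trans (hcsq_le_t k m) h1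
    have := sq_nonneg (c (k, m))
    have h3 : c (k, m) ^ 2 = 0 := le_antisymm h2 this
    exact pow_eq_zero_iff (two_ne_zero) |>.mp h3
  have hg_bound : ∀ p : ℕ × ℕ, g p ^ 2 ≤ c p ^ 2 + c p ^ 2 * w p.2 := by
    rintro ⟨k, m⟩
    rcases eq_or_lt_of_le (hR0 m) with h0 | hRm
    · have hcp : c (k, m) = 0 := hczero k m h0.symm
      have hg0 : g (k, m) = 0 := by
        show c (k, m) / φ (μ m) = 0
        rw [hcp, zero_div]
      rw [hg0, hcp]
      norm_num
    · have hq : 0 < Real.sqrt (R m / δ) := Real.sqrt_pos.mpr (div_pos hRm hδpos)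
      have hmin : 0 < min 1 (Real.sqrt (R m / δ)) := lt_min one_pos hq
      have hφ2 : 0 < φ (μ m) ^ 2 := lt_of_lt_of_le hmin (hφsq m)
      have hφp : 0 < φ (μ m) := by
        have := hφnonneg (μ m)
        nlinarith
      have key : 1 / φ (μ m) ^ 2 ≤ 1 + w m := by
        have h1 : 1 / φ (μ m) ^ 2 ≤ 1 / min 1 (Real.sqrt (R m / δ)) :=
          one_div_le_one_div_of_le hmin (hφsq m)
        have h2 : 1 / min 1 (Real.sqrt (R m / δ)) ≤ 1 + w m := by
          rcases le_total (1:ℝ) (Real.sqrt (R m / δ)) with h | h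
          · rw [min_eq_left h]
            simpa using hw0 m
          · rw [min_eq_right h]
            have heq : 1 / Real.sqrt (R m / δ) = w m := by
              rw [Real.sqrt_div (hR0 m), hwdef]
              rw [one_div, inv_div]
            rw [heq]
            linarith [hw0 m]
        linarith
      have hgp : g (k, m) ^ 2 = c (k, m) ^ 2 * (1 / φ (μ m) ^ 2) := by
        rw [show g (k, m) = c (k, m) / φ (μ m) from rfl]
        field_simp
      rw [hgp]
      calc c (k, m) ^ 2 * (1 / φ (μ m) ^ 2) ≤ c (k, m) ^ 2 * (1 + w m) :=
            mul_le_mul_of_nonneg_left key (sq_nonneg _)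
        _ = c (k, m) ^ 2 + c (k, m) ^ 2 * w m := by ring
  -- summability of t * w and its sum bound
  have htw_term : ∀ m, t m * w m ≤ 2 * Real.sqrt δ * (Real.sqrt (R m) - Real.sqrt (R (m + 1))) := by
    intro m
    have h1 := aux_div_sqrt (hR0 (m + 1)) (ht0 m) (hR_rec m).symm
    have h2 : 0 ≤ Real.sqrt δ := Real.sqrt_nonneg δ
    calc t m * w m = Real.sqrt δ * (t m / Real.sqrt (R m)) := by rw [hwdef]; ring
      _ ≤ Real.sqrt δ * (2 * (Real.sqrt (R m) - Real.sqrt (R (m + 1)))) :=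
          mul_le_mul_of_nonneg_left h1 h2
      _ = 2 * Real.sqrt δ * (Real.sqrt (R m) - Real.sqrt (R (m + 1))) := by ring
  have htw_nonneg : ∀ m, 0 ≤ t m * w m := fun m => mul_nonneg (ht0 m) (hw0 m)
  have hpartial : ∀ n, ∑ m ∈ Finset.range n, (t m * w m) ≤ 2 * Real.sqrt δ * ‖f‖ := by
    intro n
    calc ∑ m ∈ Finset.range n, (t m * w m)
        ≤ ∑ m ∈ Finset.range n, 2 * Real.sqrt δ * (Real.sqrt (R m) - Real.sqrt (R (m + 1))) :=
          Finset.sum_le_sum fun m _ => htw_term m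
      _ = 2 * Real.sqrt δ * ∑ m ∈ Finset.range n, (Real.sqrt (R m) - Real.sqrt (R (m + 1))) := by
          rw [Finset.mul_sum]
      _ = 2 * Real.sqrt δ * (Real.sqrt (R 0) - Real.sqrt (R n)) := by
          rw [Finset.sum_range_sub' (fun m => Real.sqrt (R m))]
      _ ≤ 2 * Real.sqrt δ * Real.sqrt (R 0) := by
          have : 0 ≤ Real.sqrt (R n) := Real.sqrt_nonneg _
          have h2 : 0 ≤ Real.sqrt δ := Real.sqrt_nonneg δ
          nlinarith
      _ = 2 * Real.sqrt δ * ‖f‖ := by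
          rw [hR_zero, Real.sqrt_sq (norm_nonneg f)]
  have htw_sum : Summable fun m => t m * w m := summable_of_sum_range_le htw_nonneg hpartial
  have htw_tsum : ∑' m, t m * w m ≤ 2 * Real.sqrt δ * ‖f‖ :=
    Real.tsum_le_of_sum_range_le htw_nonneg hpartial
  -- the product-indexed correction term
  set B2 : ℕ × ℕ → ℝ := fun p => c p ^ 2 * w p.2 with hB2def
  set B2' : ℕ × ℕ → ℝ := fun q => c (q.2, q.1) ^ 2 * w q.1 with hB2'def
  have hB2'_nonneg : ∀ q, 0 ≤ B2' q := fun q => mul_nonneg (sq_nonneg _) (hw0 _)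
  have hB2'_fiber : ∀ m, Summable fun k => B2' (m, k) := fun m => (ht_sum_k m).mul_right (w m)
  have hB2'_fiber_sum : ∀ m, ∑' k, B2' (m, k) = t m * w m := by
    intro m
    simp only [hB2'def]
    exact tsum_mul_right
  have hB2'_sum : Summable B2' := by
    rw [summable_prod_of_nonneg hB2'_nonneg]
    refine ⟨hB2'_fiber, ?_⟩
    simpa only [hB2'_fiber_sum] using htw_sum
  have hB2_sum : Summable B2 := by
    rw [← (Equiv.prodComm ℕ ℕ).summable_iff]
    have : (B2 ∘ (Equiv.prodComm ℕ ℕ)) = B2' := by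
      funext q; rcases q with ⟨m, k⟩; rfl
    rw [this]
    exact hB2'_sum
  have hB2_tsum : ∑' p, B2 p ≤ 2 * Real.sqrt δ * ‖f‖ := by
    have h1 : ∑' p, B2 p = ∑' q, B2' q := by
      rw [← (Equiv.prodComm ℕ ℕ).tsum_eq B2]
      apply tsum_congr
      rintro ⟨m, k⟩; rfl
    rw [h1, Summable.tsum_prod' hB2'_sum hB2'_fiber]
    calc ∑' m, ∑' k, B2' (m, k) = ∑' m, t m * w m := by
          apply tsum_congr; intro m; exact hB2'_fiber_sum m
      _ ≤ 2 * Real.sqrt δ * ‖f‖ := htw_tsum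
  -- summability of g² and norm bound
  have hB_sum : Summable fun p => c p ^ 2 + B2 p := hc_sum.add hB2_sum
  have hg_sq_sum : Summable fun p => g p ^ 2 :=
    Summable.of_nonneg_of_le (fun p => sq_nonneg _) hg_bound hB_sum
  have hg_tsum : ∑' p, g p ^ 2 ≤ ‖f‖ ^ 2 + 2 * Real.sqrt δ * ‖f‖ := by
    calc ∑' p, g p ^ 2 ≤ ∑' p, (c p ^ 2 + B2 p) := Summable.tsum_le_tsum hg_bound hg_sq_sum hB_sum
      _ = ‖f‖ ^ 2 + ∑' p, B2 p := by rw [Summable.tsum_add hc_sum hB2_sum, hc_tsum]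
      _ ≤ ‖f‖ ^ 2 + 2 * Real.sqrt δ * ‖f‖ := by linarith [hB2_tsum]
  -- construct v
  have hmem : Memℓp g 2 := by
    apply memℓp_gen
    have heq : (fun p => ‖g p‖ ^ (2 : ℝ≥0∞).toReal) = fun p => g p ^ 2 := by
      funext p
      have h2 : ((2:ℝ≥0∞)).toReal = ((2:ℕ):ℝ) := by simp
      rw [h2, Real.rpow_natCast, Real.norm_eq_abs, sq_abs]
    rw [heq]
    exact hg_sq_sum
  set gl : lp (fun _ : ℕ × ℕ => ℝ) 2 := ⟨g, hmem⟩ with hgldef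
  set v : H := ψ.repr.symm gl with hvdef
  have hv_repr : ∀ p, ψ.repr v p = g p := by
    intro p
    rw [hvdef, LinearIsometryEquiv.apply_symm_apply]
  have hv_inner : ∀ p, (inner ℝ v (ψ p) : ℝ) = g p := by
    intro p
    rw [real_inner_comm, ← ψ.repr_apply_apply, hv_repr]
  have hv_norm_sq : ‖v‖ ^ 2 = ∑' p, g p ^ 2 := by
    have h1 := (ψ.hasSum_inner_mul_inner v v).tsum_eq
    rw [real_inner_self_eq_norm_sq] at h1
    rw [← h1]
    apply tsum_congr
    intro p
    have h2 : (inner ℝ (ψ p) v : ℝ) = g p := by rw [← hv_inner p, real_inner_comm]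
    rw [hv_inner p, h2, sq]
  have hv_norm : ‖v‖ ≤ (1 + ε) * ‖f‖ := by
    have h1 : ‖v‖ ^ 2 ≤ ‖f‖ ^ 2 + 2 * (ε * ‖f‖) * ‖f‖ := by
      rw [hv_norm_sq, ← hsqrtδ]; exact hg_tsum
    have h2 : ‖v‖ ^ 2 ≤ ((1 + ε) * ‖f‖) ^ 2 := by nlinarith [sq_nonneg (ε * ‖f‖)]
    calc ‖v‖ = Real.sqrt (‖v‖ ^ 2) := (Real.sqrt_sq (norm_nonneg v)).symm
      _ ≤ Real.sqrt (((1 + ε) * ‖f‖) ^ 2) := Real.sqrt_le_sqrt h2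
      _ = (1 + ε) * ‖f‖ := Real.sqrt_sq (by positivity)
  -- conclusion
  refine ⟨φ, v, hφcont, hφmono, hφ0, hv_norm, ?_⟩
  intro k m
  rw [hv_inner (k, m)]
  show c (k, m) = φ (μ m) * g (k, m)
  by_cases hz : φ (μ m) = 0
  · have hs0 : Real.sqrt (Real.sqrt (W (μ m) / δ)) = 0 := by
      rcases min_cases (1:ℝ) (Real.sqrt (Real.sqrt (W (μ m) / δ))) with ⟨he, _⟩ | ⟨he, _⟩
      · exfalso; rw [hφdef] at hz; simp only [] at hz; rw [he] at hz; norm_num at hz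
      · rw [hφdef] at hz; simp only [] at hz; rw [he] at hz; exact hz
    have hW' : W (μ m) / δ ≤ 0 := by
      have h1 : Real.sqrt (W (μ m) / δ) = 0 := by
        have := Real.sqrt_eq_zero'.mp hs0
        have h2 := Real.sqrt_nonneg (W (μ m) / δ)
        linarith
      have := Real.sqrt_eq_zero'.mp h1
      exact this
    have hWm0 : W (μ m) ≤ 0 := by
      by_contra h
      push_neg at h
      have : 0 < W (μ m) / δ := div_pos h hδpos
      linarith
    have hRm0 : R m = 0 := le_antisymm (le_trans (hWR m) hWm0) (hR0 m)
    have hcp : c (k, m) = 0 := hczero k m hRm0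
    rw [hcp, hz, zero_mul]
  · have hge : g (k, m) = c (k, m) / φ (μ m) := rfl
    rw [hge]
    field_simp
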